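/- Let d ≥ 1 and let N : ℕ → Matrix (Fin d) (Fin d) ℂ be a countable family of matrices such that for every vector ψ ∈ ℂ^d the family i ↦ ‖N_i ψ‖² is summable with Σ_i ‖N_i ψ‖² ≤ ‖ψ‖². Then the set V = { ψ ∈ ℂ^d : Σ_{i=0}^∞ ‖N_i ψ‖² = ‖ψ‖² } is a ℂ-linear subspace of ℂ^d (it contains 0 and is closed under addition and scalar multiplication). -/
import Mathlib


open Matrix

/-- The squared Hermitian (ℓ²) norm of a vector in `ℂ^d`. -/
noncomputable def normSq' {d : ℕ} (v : Fin d → ℂ) : ℝ := ∑ x, ‖v x‖ ^ 2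

lemma normSq'_nonneg {d : ℕ} (v : Fin d → ℂ) : 0 ≤ normSq' v :=
  Finset.sum_nonneg fun _ _ => by positivity

lemma normSq'_zero {d : ℕ} : normSq' (0 : Fin d → ℂ) = 0 := by
  simp [normSq']

lemma normSq'_smul {d : ℕ} (c : ℂ) (v : Fin d → ℂ) :
    normSq' (c • v) = ‖c‖ ^ 2 * normSq' v := by
  simp [normSq', Finset.mul_sum, norm_smul, mul_pow]

lemma para (a b : ℂ) : ‖a + b‖ ^ 2 + ‖a - b‖ ^ 2 = 2 * ‖a‖ ^ 2 + 2 * ‖b‖ ^ 2 := by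
  have := parallelogram_law_with_norm ℂ a b
  simp only [sq]
  linarith

lemma normSq'_para {d : ℕ} (u v : Fin d → ℂ) :
    normSq' (u + v) + normSq' (u - v) = 2 * normSq' u + 2 * normSq' v := by
  unfold normSq'
  rw [← Finset.sum_add_distrib, Finset.mul_sum, Finset.mul_sum, ← Finset.sum_add_distrib]
  exact Finset.sum_congr rfl fun x _ => para (u x) (v x)

/-- The set of (unnormalised) pure states from which a quantum program with countable
Kraus family `N` almost surely terminates is a ℂ-linear subspace of `ℂ^d`. -/
theorem terminating_states_subspace
    (d : ℕ) (hd : 1 ≤ d) (N : ℕ → Matrix (Fin d) (Fin d) ℂ)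
    (hsum : ∀ ψ : Fin d → ℂ, Summable (fun i => normSq' (N i *ᵥ ψ)) ∧
      ∑' i : ℕ, normSq' (N i *ᵥ ψ) ≤ normSq' ψ) :
    ∃ V : Submodule ℂ (Fin d → ℂ),
      (V : Set (Fin d → ℂ)) = {ψ : Fin d → ℂ | ∑' i : ℕ, normSq' (N i *ᵥ ψ) = normSq' ψ} := by
  refine ⟨{ carrier := {ψ : Fin d → ℂ | ∑' i : ℕ, normSq' (N i *ᵥ ψ) = normSq' ψ}
            zero_mem' := ?_
            add_mem' := ?_
            smul_mem' := ?_ }, rfl⟩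
  · intro x y hx hy
    simp only [Set.mem_setOf_eq] at *
    -- parallelogram identity for the tsum
    have hxy := (hsum (x + y)).1
    have hxy' := (hsum (x - y)).1
    have key : ∀ i, normSq' (N i *ᵥ (x + y)) + normSq' (N i *ᵥ (x - y)) =
        2 * normSq' (N i *ᵥ x) + 2 * normSq' (N i *ᵥ y) := by
      intro i
      rw [Matrix.mulVec_add, Matrix.mulVec_sub]
      exact normSq'_para _ _
    have hsum_eq : ∑' i, normSq' (N i *ᵥ (x + y)) + ∑' i, normSq' (N i *ᵥ (x - y)) =
        2 * normSq' x + 2 * normSq' y := by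
      rw [← Summable.tsum_add hxy hxy']
      have hx2 : Summable (fun i => 2 * normSq' (N i *ᵥ x)) := (hsum x).1.mul_left 2
      have hy2 : Summable (fun i => 2 * normSq' (N i *ᵥ y)) := (hsum y).1.mul_left 2
      calc ∑' i, (normSq' (N i *ᵥ (x + y)) + normSq' (N i *ᵥ (x - y)))
          = ∑' i, (2 * normSq' (N i *ᵥ x) + 2 * normSq' (N i *ᵥ y)) := by
            exact tsum_congr key
        _ = 2 * normSq' x + 2 * normSq' y := by
            rw [Summable.tsum_add hx2 hy2, tsum_mul_left, tsum_mul_left, hx, hy]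
    have h1 := (hsum (x + y)).2
    have h2 := (hsum (x - y)).2
    have hpar := normSq'_para x y
    linarith
  · simp [Set.mem_setOf_eq, normSq'_zero, Matrix.mulVec_zero]
  · intro c x hx
    simp only [Set.mem_setOf_eq] at *
    have : ∀ i, normSq' (N i *ᵥ (c • x)) = ‖c‖ ^ 2 * normSq' (N i *ᵥ x) := by
      intro i
      rw [Matrix.mulVec_smul, normSq'_smul]
    calc ∑' i, normSq' (N i *ᵥ (c • x)) = ∑' i, ‖c‖ ^ 2 * normSq' (N i *ᵥ x) :=
          tsum_congr this
      _ = ‖c‖ ^ 2 * ∑' i, normSq' (N i *ᵥ x) := tsum_mul_left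
      _ = normSq' (c • x) := by rw [hx, normSq'_smul]
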